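/- arXiv:2605.28408 — 2 statements merged into one kernel-verified Lean document; each statement's English description precedes it below -/
import Mathlib

section
/- Let A_+ be the automaton over Σ_k^3 with states {q₀, q₁, s}, initial state q₀, and transitions: (q₀, (a, b, c), q₀) whenever c = a + b < k; (q₀, (a, b, c), q₁) whenever a + b ≥ k and c = a + b − k; (q₁, (a, b, c), q₁) whenever a + b + 1 ≥ k and c = a + b + 1 − k; (q₁, (a, b, c), q₀) whenever c = a + b + 1 < k; and all remaining letter–state pairs lead to the sink s (including (s, ·, s)). Then for all x, y, z, n ∈ ℕ: (x mod k^n) + (y mod k^n) = z mod k^n if and only if W_{A_+,q₀}(x, y, z, n); and (x mod k^n) + (y mod k^n) = (z mod k^n) + k^n if and only if W_{A_+,q₁}(x, y, z, n). -/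
/-- The `i`-th base-`k` digit of `x`. -/
def digit (k x i : ℕ) : ℕ := x / k ^ i % k

/-- A finite automaton over the alphabet `Σ_k^m = (Fin k)^m`. -/
structure FA (k m : ℕ) where
  Q : Type
  fin : Finite Q
  q0 : Q
  acc : Set Q
  δ : Set (Q × (Fin m → Fin k) × Q)

/-- The run predicate `W_{A,q₁}(x⃗, n)`: the automaton `A` can reach state `q₁`
after reading the first `n` base-`k` digits of `x⃗`, the run being encoded by a
family `(w_q)` of natural numbers. -/
def FA.W {k m : ℕ} (A : FA k m) (q1 : A.Q) (x : Fin m → ℕ) (n : ℕ) : Prop :=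
  ∃ w : A.Q → ℕ,
    (∀ q, w q < k ^ (n + 1)) ∧
    (∀ i ≤ n, ∃ q, digit k (w q) i = 1 ∧ ∀ q' ≠ q, digit k (w q') i = 0) ∧
    digit k (w A.q0) 0 = 1 ∧ digit k (w q1) n = 1 ∧
    ∀ i < n, ∀ q, digit k (w q) i = 1 →
      ∃ a : Fin m → Fin k, ∃ q', (q, a, q') ∈ A.δ ∧ digit k (w q') (i + 1) = 1 ∧
        ∀ j, digit k (x j) i = (a j : ℕ)

/-- The automaton `A₊` recognizing `x + y = z`: states `q₀ = 0` (no carry),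
`q₁ = 1` (carry) and a sink `s = 2`; all remaining letter–state pairs go to the
sink. -/
def APlus (k : ℕ) : FA k 3 where
  Q := Fin 3
  fin := inferInstance
  q0 := 0
  acc := {0}
  δ := {t | (t.1 = 0 ∧ ((t.2.1 0 : ℕ) + (t.2.1 1 : ℕ) < k ∧
              (t.2.1 2 : ℕ) = (t.2.1 0 : ℕ) + (t.2.1 1 : ℕ)) ∧ t.2.2 = 0) ∨
            (t.1 = 0 ∧ (k ≤ (t.2.1 0 : ℕ) + (t.2.1 1 : ℕ) ∧
              (t.2.1 2 : ℕ) + k = (t.2.1 0 : ℕ) + (t.2.1 1 : ℕ)) ∧ t.2.2 = 1) ∨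
            (t.1 = 1 ∧ (k ≤ (t.2.1 0 : ℕ) + (t.2.1 1 : ℕ) + 1 ∧
              (t.2.1 2 : ℕ) + k = (t.2.1 0 : ℕ) + (t.2.1 1 : ℕ) + 1) ∧ t.2.2 = 1) ∨
            (t.1 = 1 ∧ ((t.2.1 0 : ℕ) + (t.2.1 1 : ℕ) + 1 < k ∧
              (t.2.1 2 : ℕ) = (t.2.1 0 : ℕ) + (t.2.1 1 : ℕ) + 1) ∧ t.2.2 = 0) ∨
            (t.1 = 0 ∧ ¬((t.2.1 2 : ℕ) = (t.2.1 0 : ℕ) + (t.2.1 1 : ℕ) ∨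
              (t.2.1 2 : ℕ) + k = (t.2.1 0 : ℕ) + (t.2.1 1 : ℕ)) ∧ t.2.2 = 2) ∨
            (t.1 = 1 ∧ ¬((t.2.1 2 : ℕ) = (t.2.1 0 : ℕ) + (t.2.1 1 : ℕ) + 1 ∨
              (t.2.1 2 : ℕ) + k = (t.2.1 0 : ℕ) + (t.2.1 1 : ℕ) + 1) ∧ t.2.2 = 2) ∨
            (t.1 = 2 ∧ t.2.2 = 2)}

section Aux

variable {k : ℕ}

lemma digit_lt_k (hk : 0 < k) (x i : ℕ) : digit k x i < k := Nat.mod_lt _ hk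

lemma digit_mod_pow {i s : ℕ} (x : ℕ) (h : i < s) :
    digit k (x % k ^ s) i = digit k x i := by
  obtain ⟨t, ht, rfl⟩ : ∃ t, 0 < t ∧ s = i + t := ⟨s - i, by omega, by omega⟩
  unfold digit
  rw [pow_add, Nat.mod_mul_right_div_self,
    Nat.mod_mod_of_dvd _ (dvd_pow_self k (by omega : t ≠ 0))]

lemma digit_add_pow (hk : 0 < k) {i s : ℕ} (x : ℕ) (h : i < s) :
    digit k (x + k ^ s) i = digit k x i := by
  obtain ⟨u, rfl⟩ : ∃ u, s = i + (u + 1) := ⟨s - i - 1, by omega⟩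
  unfold digit
  rw [pow_add, Nat.add_mul_div_left _ _ (pow_pos hk i), pow_succ,
    Nat.add_mul_mod_self_right]

lemma digit_eq_zero_of_lt {x s : ℕ} (h : x < k ^ s) : digit k x s = 0 := by
  unfold digit
  rw [Nat.div_eq_of_lt h, Nat.zero_mod]

lemma digit_add_pow_self {x s : ℕ} (hk : 2 ≤ k) (h : x < k ^ s) :
    digit k (x + k ^ s) s = 1 := by
  unfold digit
  rw [Nat.add_div_right _ (pow_pos (by omega) s), Nat.div_eq_of_lt h,
    Nat.zero_add, Nat.mod_eq_of_lt (by omega)]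

theorem FA.W_succ {k m : ℕ} (hk : 2 ≤ k) (A : FA k m) (q1 : A.Q) (x : Fin m → ℕ) (n : ℕ) :
    A.W q1 x (n + 1) ↔
      ∃ (q : A.Q) (a : Fin m → Fin k), (q, a, q1) ∈ A.δ ∧
        (∀ j, digit k (x j) n = (a j : ℕ)) ∧ A.W q x n := by
  classical
  have hk0 : 0 < k := by omega
  constructor
  · rintro ⟨w, hlt, huniq, h0, h1, htr⟩
    obtain ⟨q, hq, hq'⟩ := huniq n (by omega)
    obtain ⟨a, q', hδ, hd1, hmatch⟩ := htr n (by omega) q hq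
    obtain ⟨q'', hq'', huq⟩ := huniq (n + 1) le_rfl
    have e1 : q' = q'' := by
      by_contra hne
      have := huq q' hne
      omega
    have e2 : q1 = q'' := by
      by_contra hne
      have := huq q1 hne
      omega
    rw [e1.trans e2.symm] at hδ
    have hdig : ∀ p i, i ≤ n → digit k (w p % k ^ (n + 1)) i = digit k (w p) i :=
      fun p i hi => digit_mod_pow _ (by omega)
    refine ⟨q, a, hδ, hmatch, fun p => w p % k ^ (n + 1),
      fun p => Nat.mod_lt _ (pow_pos hk0 _), ?_, ?_, ?_, ?_⟩
    · intro i hi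
      obtain ⟨r, hr, hr'⟩ := huniq i (by omega)
      exact ⟨r, by rw [hdig _ _ hi]; exact hr,
        fun r' hne => by rw [hdig _ _ hi]; exact hr' r' hne⟩
    · rw [hdig _ _ (Nat.zero_le n)]; exact h0
    · rw [hdig _ _ le_rfl]; exact hq
    · intro i hi r hr
      rw [hdig _ _ (by omega)] at hr
      obtain ⟨a', r', h₁, h₂, h₃⟩ := htr i (by omega) r hr
      exact ⟨a', r', h₁, by rw [hdig _ _ (by omega)]; exact h₂, h₃⟩
  · rintro ⟨q, a, hδ, hmatch, w, hlt, huniq, h0, h1, htr⟩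
    set w' : A.Q → ℕ := fun p => if p = q1 then w p + k ^ (n + 1) else w p with hw'
    have hdig : ∀ p i, i ≤ n → digit k (w' p) i = digit k (w p) i := by
      intro p i hi
      simp only [hw']
      split
      · exact digit_add_pow hk0 _ (by omega)
      · rfl
    have htop : ∀ p, digit k (w' p) (n + 1) = if p = q1 then 1 else 0 := by
      intro p
      simp only [hw']
      split
      · exact digit_add_pow_self hk (hlt p)
      · exact digit_eq_zero_of_lt (hlt p)
    refine ⟨w', ?_, ?_, ?_, ?_, ?_⟩
    · intro p
      simp only [hw']
      have hb := hlt p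
      have h2 : 2 * k ^ (n + 1) ≤ k * k ^ (n + 1) := Nat.mul_le_mul_right _ hk
      have h3 : k ^ (n + 1 + 1) = k * k ^ (n + 1) := by ring
      split <;> omega
    · intro i hi
      rcases Nat.lt_or_ge i (n + 1) with hlt' | hge
      · obtain ⟨r, hr, hr'⟩ := huniq i (by omega)
        exact ⟨r, by rw [hdig _ _ (by omega)]; exact hr,
          fun r' hne => by rw [hdig _ _ (by omega)]; exact hr' r' hne⟩
      · have : i = n + 1 := by omega
        subst this
        exact ⟨q1, by rw [htop]; simp, fun r hne => by rw [htop]; simp [hne]⟩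
    · rw [hdig _ _ (Nat.zero_le n)]; exact h0
    · rw [htop]; simp
    · intro i hi r hr
      rcases Nat.lt_or_ge i n with hlt' | hge
      · rw [hdig _ _ (by omega)] at hr
        obtain ⟨a', r', h₁, h₂, h₃⟩ := htr i (by omega) r hr
        exact ⟨a', r', h₁, by rw [hdig _ _ (by omega)]; exact h₂, h₃⟩
      · have hin : i = n := by omega
        subst hin
        rw [hdig _ _ le_rfl] at hr
        obtain ⟨s, hs, hs'⟩ := huniq i le_rfl
        have er : r = s := by
          by_contra hne
          have := hs' r hne
          omega
        have eq' : q = s := by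
          by_contra hne
          have := hs' q hne
          omega
        rw [er.trans eq'.symm]
        exact ⟨a, q1, hδ, by rw [htop]; simp, hmatch⟩

lemma carry_key (p X Y Z u v w : ℕ) (hp : 0 < p) (hX : X < p) (hY : Y < p) (hZ : Z < p)
    (h : X + u * p + (Y + v * p) = Z + w * p) :
    (X + Y = Z ∧ u + v = w) ∨ (X + Y = Z + p ∧ u + v + 1 = w) := by
  have h' : (X + Y) + (u + v) * p = Z + w * p := by rw [add_mul]; linarith
  have hm : (X + Y) % p = Z := by
    have h2 := congrArg (· % p) h'
    simpa [Nat.add_mul_mod_self_right, Nat.mod_eq_of_lt hZ] using h2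
  rcases Nat.lt_or_ge (X + Y) p with hlt | hge
  · left
    have e : X + Y = Z := by rwa [Nat.mod_eq_of_lt hlt] at hm
    refine ⟨e, ?_⟩
    rw [e] at h'
    exact Nat.eq_of_mul_eq_mul_right hp (Nat.add_left_cancel h')
  · right
    have e : X + Y = Z + p := by
      have h3 : (X + Y - p) % p = Z := by rwa [Nat.mod_eq_sub_mod hge] at hm
      rw [Nat.mod_eq_of_lt (by omega)] at h3
      omega
    refine ⟨e, ?_⟩
    rw [e, Nat.add_assoc] at h'
    have h4 := Nat.add_left_cancel h'
    have h5 : (u + v + 1) * p = w * p := by rw [add_mul, one_mul]; linarith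
    exact Nat.eq_of_mul_eq_mul_right hp h5

lemma mod_pow_succ_eq (k x n : ℕ) : x % k ^ (n + 1) = x % k ^ n + digit k x n * k ^ n := by
  conv_lhs => rw [pow_succ, Nat.mod_mul]
  unfold digit
  ring

/-- indicator witness -/
def wit (v : Fin 3) : Fin 3 → ℕ := fun q => if q = v then 1 else 0

lemma wit_self (v : Fin 3) : wit v v = 1 := if_pos rfl

lemma wit_ne {q v : Fin 3} (h : q ≠ v) : wit v q = 0 := if_neg h

lemma wit_le (v q : Fin 3) : wit v q ≤ 1 := by
  unfold wit; split <;> omega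

end Aux

/-- `A₊` computes addition on residues modulo `k^n`: state `q₀` is reached iff
`(x mod k^n) + (y mod k^n) = z mod k^n`, and state `q₁` iff
`(x mod k^n) + (y mod k^n) = (z mod k^n) + k^n`. -/
theorem stmt17 (k : ℕ) (hk : 2 ≤ k) :
    ∀ x y z n : ℕ,
      ((x % k ^ n) + (y % k ^ n) = z % k ^ n ↔ (APlus k).W (0 : Fin 3) ![x, y, z] n) ∧
      ((x % k ^ n) + (y % k ^ n) = (z % k ^ n) + k ^ n ↔
        (APlus k).W (1 : Fin 3) ![x, y, z] n) := by
  have hk0 : 0 < k := by omega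
  have d1 : digit k 1 0 = 1 := by
    unfold digit
    simp [Nat.mod_eq_of_lt (by omega : 1 < k)]
  have d0 : ∀ i, digit k 0 i = 0 := by
    intro i; unfold digit; simp
  intro x y z n
  induction n with
  | zero =>
    constructor
    · constructor
      · intro _
        refine ⟨wit 0, ?_, ?_, ?_, ?_, ?_⟩
        · intro q
          have hb := wit_le 0 q
          have hpow : k ^ (0 + 1) = k := pow_one k
          omega
        · intro i hi
          have hi0 : i = 0 := by omega
          subst hi0
          refine ⟨(0 : Fin 3), ?_, ?_⟩
          · rw [wit_self]
            exact d1
          · intro q' hne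
            rw [wit_ne hne]
            exact d0 0
        · rw [show wit (0 : Fin 3) ((APlus k).q0) = 1 from wit_self 0]
          exact d1
        · rw [show wit (0 : Fin 3) (0 : Fin 3) = 1 from wit_self 0]
          exact d1
        · intro i hi
          exact absurd hi (by omega)
      · intro _
        simp [Nat.mod_one]
    · constructor
      · intro h
        rw [pow_zero, Nat.mod_one, Nat.mod_one, Nat.mod_one] at h
        omega
      · rintro ⟨w, _, huniq, h0, h1, _⟩
        exfalso
        obtain ⟨s, hs, hs'⟩ := huniq 0 le_rfl
        have e0 : (APlus k).q0 = s := by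
          by_contra hne
          have := hs' _ hne
          omega
        have e1 : (1 : Fin 3) = s := by
          by_contra hne
          have := hs' _ hne
          omega
        have : (0 : Fin 3) = 1 := by
          rw [show ((0 : Fin 3)) = (APlus k).q0 from rfl, e0, ← e1]
        exact absurd this (by decide)
  | succ n ih =>
    obtain ⟨ih0, ih1⟩ := ih
    have hp : 0 < k ^ n := pow_pos hk0 n
    have hX : x % k ^ n < k ^ n := Nat.mod_lt _ hp
    have hY : y % k ^ n < k ^ n := Nat.mod_lt _ hp
    have hZ : z % k ^ n < k ^ n := Nat.mod_lt _ hp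
    have hdx : digit k x n < k := digit_lt_k hk0 x n
    have hdy : digit k y n < k := digit_lt_k hk0 y n
    have hdz : digit k z n < k := digit_lt_k hk0 z n
    rw [mod_pow_succ_eq k x n, mod_pow_succ_eq k y n, mod_pow_succ_eq k z n]
    constructor
    · refine Iff.trans ?_ (FA.W_succ hk (APlus k) (0 : Fin 3) ![x, y, z] n).symm
      constructor
      · intro heq
        rcases carry_key (k ^ n) _ _ _ _ _ _ hp hX hY hZ heq with ⟨hXY, hD⟩ | ⟨hXY, hD⟩
        · refine ⟨(0 : Fin 3), fun j => ⟨digit k (![x, y, z] j) n, digit_lt_k hk0 _ _⟩, ?_,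
            fun j => rfl, ih0.mp hXY⟩
          simp only [APlus, Set.mem_setOf_eq]
          left
          refine ⟨by trivial, ⟨?_, ?_⟩, by trivial⟩
          · show digit k x n + digit k y n < k
            omega
          · show digit k z n = digit k x n + digit k y n
            omega
        · refine ⟨(1 : Fin 3), fun j => ⟨digit k (![x, y, z] j) n, digit_lt_k hk0 _ _⟩, ?_,
            fun j => rfl, ih1.mp hXY⟩
          simp only [APlus, Set.mem_setOf_eq]
          right; right; right; left
          refine ⟨by trivial, ⟨?_, ?_⟩, by trivial⟩
          · show digit k x n + digit k y n + 1 < k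
            omega
          · show digit k z n = digit k x n + digit k y n + 1
            omega
      · rintro ⟨q, a, hδ, hm, hW⟩
        have e0 : digit k x n = (a 0 : ℕ) := hm 0
        have e1 : digit k y n = (a 1 : ℕ) := hm 1
        have e2 : digit k z n = (a 2 : ℕ) := hm 2
        simp only [APlus, Set.mem_setOf_eq] at hδ
        change _ ∨ _ at hδ
        dsimp only at hδ
        rcases hδ with ⟨hq, ⟨hc1, hc2⟩, _⟩ | ⟨_, _, hbad⟩ | ⟨_, _, hbad⟩ |
          ⟨hq, ⟨hc1, hc2⟩, _⟩ | ⟨_, _, hbad⟩ | ⟨_, _, hbad⟩ | ⟨_, hbad⟩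
        · subst hq
          have hXY := ih0.mpr hW
          have hD : digit k z n = digit k x n + digit k y n := by omega
          rw [hD, add_mul]
          linarith
        · exact absurd hbad (by decide)
        · exact absurd hbad (by decide)
        · subst hq
          have hXY := ih1.mpr hW
          have hD : digit k z n = digit k x n + digit k y n + 1 := by omega
          rw [hD, add_mul, add_mul, one_mul]
          linarith
        · exact absurd hbad (by decide)
        · exact absurd hbad (by decide)
        · exact absurd hbad (by decide)
    · refine Iff.trans ?_ (FA.W_succ hk (APlus k) (1 : Fin 3) ![x, y, z] n).symm
      constructor
      · intro heq
        rw [show k ^ (n + 1) = k * k ^ n from by ring] at heq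
        have heq' : x % k ^ n + digit k x n * k ^ n + (y % k ^ n + digit k y n * k ^ n) =
            z % k ^ n + (digit k z n + k) * k ^ n := by
          rw [add_mul]
          linarith
        rcases carry_key (k ^ n) _ _ _ _ _ _ hp hX hY hZ heq' with ⟨hXY, hD⟩ | ⟨hXY, hD⟩
        · refine ⟨(0 : Fin 3), fun j => ⟨digit k (![x, y, z] j) n, digit_lt_k hk0 _ _⟩, ?_,
            fun j => rfl, ih0.mp hXY⟩
          simp only [APlus, Set.mem_setOf_eq]
          right; left
          refine ⟨by trivial, ⟨?_, ?_⟩, by trivial⟩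
          · show k ≤ digit k x n + digit k y n
            omega
          · show digit k z n + k = digit k x n + digit k y n
            omega
        · refine ⟨(1 : Fin 3), fun j => ⟨digit k (![x, y, z] j) n, digit_lt_k hk0 _ _⟩, ?_,
            fun j => rfl, ih1.mp hXY⟩
          simp only [APlus, Set.mem_setOf_eq]
          right; right; left
          refine ⟨by trivial, ⟨?_, ?_⟩, by trivial⟩
          · show k ≤ digit k x n + digit k y n + 1
            omega
          · show digit k z n + k = digit k x n + digit k y n + 1
            omega
      · rintro ⟨q, a, hδ, hm, hW⟩
        have e0 : digit k x n = (a 0 : ℕ) := hm 0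
        have e1 : digit k y n = (a 1 : ℕ) := hm 1
        have e2 : digit k z n = (a 2 : ℕ) := hm 2
        simp only [APlus, Set.mem_setOf_eq] at hδ
        change _ ∨ _ at hδ
        dsimp only at hδ
        rcases hδ with ⟨_, _, hbad⟩ | ⟨hq, ⟨hc1, hc2⟩, _⟩ | ⟨hq, ⟨hc1, hc2⟩, _⟩ |
          ⟨_, _, hbad⟩ | ⟨_, _, hbad⟩ | ⟨_, _, hbad⟩ | ⟨_, hbad⟩
        · exact absurd hbad (by decide)
        · subst hq
          have hXY := ih0.mpr hW
          have hD : digit k x n + digit k y n = digit k z n + k := by omega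
          have h5 : (digit k x n + digit k y n) * k ^ n = (digit k z n + k) * k ^ n := by
            rw [hD]
          rw [add_mul, add_mul] at h5
          rw [pow_succ]
          linarith [mul_comm k (k ^ n)]
        · subst hq
          have hXY := ih1.mpr hW
          have hD : digit k x n + digit k y n + 1 = digit k z n + k := by omega
          have h5 : (digit k x n + digit k y n + 1) * k ^ n = (digit k z n + k) * k ^ n := by
            rw [hD]
          rw [add_mul, add_mul, add_mul, one_mul] at h5
          rw [pow_succ]
          linarith [mul_comm k (k ^ n)]
        · exact absurd hbad (by decide)
        · exact absurd hbad (by decide)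
        · exact absurd hbad (by decide)
        · exact absurd hbad (by decide)
end

section
/- Let A_≤ be the automaton over Σ_k^2 with states {q₀, q₁}, initial state q₀, and transitions: (q₀, (a, b), q₀) whenever a ≤ b; (q₀, (a, b), q₁) whenever a > b; (q₁, (a, b), q₁) whenever a ≥ b; (q₁, (a, b), q₀) whenever a < b. Then for all x, y, n ∈ ℕ: x mod k^n ≤ y mod k^n if and only if W_{A_≤,q₀}(x, y, n); and x mod k^n > y mod k^n if and only if W_{A_≤,q₁}(x, y, n). -/
/-- The automaton `A_≤` recognizing `x ≤ y`: states `q₀ = 0` and `q₁ = 1`, with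
transitions `(q₀,(a,b),q₀)` if `a ≤ b`, `(q₀,(a,b),q₁)` if `a > b`,
`(q₁,(a,b),q₁)` if `a ≥ b`, and `(q₁,(a,b),q₀)` if `a < b`. -/
def ALe (k : ℕ) : FA k 2 where
  Q := Fin 2
  fin := inferInstance
  q0 := 0
  acc := {0}
  δ := {t | (t.1 = 0 ∧ (t.2.1 0 : ℕ) ≤ (t.2.1 1 : ℕ) ∧ t.2.2 = 0) ∨
            (t.1 = 0 ∧ (t.2.1 1 : ℕ) < (t.2.1 0 : ℕ) ∧ t.2.2 = 1) ∨
            (t.1 = 1 ∧ (t.2.1 1 : ℕ) ≤ (t.2.1 0 : ℕ) ∧ t.2.2 = 1) ∨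
            (t.1 = 1 ∧ (t.2.1 0 : ℕ) < (t.2.1 1 : ℕ) ∧ t.2.2 = 0)}

lemma digit_lt' (k x i : ℕ) (hk : 0 < k) : digit k x i < k := Nat.mod_lt _ hk

lemma mod_pow_succ' (k x i : ℕ) : x % k ^ (i+1) = x % k ^ i + k ^ i * digit k x i := by
  rw [pow_succ, Nat.mod_mul, digit]

lemma lt_step' {k i u v a b : ℕ} (hv : v < k ^ i) (hab : b < a) :
    v + k ^ i * b < u + k ^ i * a := by
  have h1 : v + k ^ i * b < k ^ i * (b + 1) := by
    have : k ^ i * (b + 1) = k ^ i * b + k ^ i := by ring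
    omega
  have h2 : k ^ i * (b + 1) ≤ k ^ i * a := Nat.mul_le_mul_left _ (by omega)
  omega

lemma cmp_step' {k i u v a b : ℕ} (hu : u < k ^ i) (hv : v < k ^ i) :
    (u + k ^ i * a ≤ v + k ^ i * b ↔ a < b ∨ (a = b ∧ u ≤ v)) := by
  rcases lt_trichotomy a b with h | h | h
  · exact ⟨fun _ => Or.inl h, fun _ => le_of_lt (lt_step' (u := v) hu h)⟩
  · subst h; omega
  · have := lt_step' (u := u) hv h
    constructor
    · intro H; omega
    · intro H; rcases H with H | ⟨H, _⟩ <;> omega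

lemma sum_lt' (k N : ℕ) (hk : 0 < k) (f : ℕ → ℕ) (hf : ∀ i, f i < k) :
    ∑ i ∈ Finset.range N, f i * k ^ i < k ^ N := by
  induction N with
  | zero => simp
  | succ N ih =>
    rw [Finset.sum_range_succ]
    have h1 : f N * k ^ N + k ^ N ≤ k * k ^ N := by
      have : f N + 1 ≤ k := hf N
      calc f N * k ^ N + k ^ N = (f N + 1) * k ^ N := by ring
        _ ≤ k * k ^ N := Nat.mul_le_mul_right _ this
    have : k * k ^ N = k ^ (N + 1) := by rw [pow_succ]; ring
    omega

lemma digit_sum' (k N : ℕ) (hk : 2 ≤ k) (f : ℕ → ℕ) (hf : ∀ i, f i < k)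
    (j : ℕ) (hj : j < N) :
    digit k (∑ i ∈ Finset.range N, f i * k ^ i) j = f j := by
  have hsplit : ∑ i ∈ Finset.range N, f i * k ^ i
      = (∑ i ∈ Finset.range j, f i * k ^ i)
        + k ^ j * (∑ i ∈ Finset.range (N - j), f (j + i) * k ^ i) := by
    rw [Finset.mul_sum]
    rw [← Finset.sum_range_add_sum_Ico _ (le_of_lt hj)]
    congr 1
    rw [Finset.sum_Ico_eq_sum_range]
    apply Finset.sum_congr rfl
    intro i _
    rw [pow_add]; ring
  have hA : (∑ i ∈ Finset.range j, f i * k ^ i) < k ^ j := sum_lt' k j (by omega) f hf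
  set A := ∑ i ∈ Finset.range j, f i * k ^ i
  set M := ∑ i ∈ Finset.range (N - j), f (j + i) * k ^ i with hM
  have hMval : M = f j + k * ∑ i ∈ Finset.range (N - j - 1), f (j + 1 + i) * k ^ i := by
    have hNj : N - j = (N - j - 1) + 1 := by omega
    rw [hM, hNj, Finset.sum_range_succ']
    rw [Finset.mul_sum]
    simp only [pow_zero, mul_one, pow_succ]
    rw [add_comm]
    congr 1
    apply Finset.sum_congr rfl
    intro i _
    have : j + (i + 1) = j + 1 + i := by omega
    rw [this]; ring
  rw [digit, hsplit]
  rw [Nat.add_mul_div_left _ _ (by positivity : 0 < k ^ j)]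
  rw [Nat.div_eq_of_lt hA, zero_add, hMval]
  rw [Nat.add_mul_mod_self_left, Nat.mod_eq_of_lt (hf j)]

section Main
variable (k x y : ℕ)

/-- The unique state of `A_≤` after reading the low `i` digits. -/
def sfun (i : ℕ) : Fin 2 := if x % k ^ i ≤ y % k ^ i then 0 else 1

variable {k}

lemma sfun_succ (hk : 2 ≤ k) (i : ℕ) :
    sfun k x y (i + 1) =
      if digit k x i < digit k y i ∨ (digit k x i = digit k y i ∧ x % k ^ i ≤ y % k ^ i)
      then 0 else 1 := by
  have hpos : 0 < k ^ i := by positivity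
  have hu : x % k ^ i < k ^ i := Nat.mod_lt _ hpos
  have hv : y % k ^ i < k ^ i := Nat.mod_lt _ hpos
  unfold sfun
  rw [mod_pow_succ' k x i, mod_pow_succ' k y i]
  exact if_congr (cmp_step' hu hv) rfl rfl

lemma trans_forward (hk : 2 ≤ k) (i : ℕ) (q q' : Fin 2) (a : Fin 2 → Fin k)
    (h : ((q, a, q') : (ALe k).Q × (Fin 2 → Fin k) × (ALe k).Q) ∈ (ALe k).δ)
    (hq : q = sfun k x y i)
    (ha0 : digit k x i = (a 0 : ℕ)) (ha1 : digit k y i = (a 1 : ℕ)) :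
    q' = sfun k x y (i + 1) := by
  unfold ALe at h
  simp only [ALe, Set.mem_setOf_eq] at h
  rw [sfun_succ x y hk i, ha0, ha1]
  by_cases hxy : x % k ^ i ≤ y % k ^ i
  · have hs : q = 0 := by rw [hq]; simp [sfun, hxy]
    rcases h with ⟨h1, h2, h3⟩ | ⟨h1, h2, h3⟩ | ⟨h1, h2, h3⟩ | ⟨h1, h2, h3⟩
    · rw [h3, if_pos (by omega)]
    · rw [h3, if_neg (by omega)]
    · rw [hs] at h1; exact absurd h1 (by decide)
    · rw [hs] at h1; exact absurd h1 (by decide)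
  · have hs : q = 1 := by rw [hq]; simp [sfun, hxy]
    rcases h with ⟨h1, h2, h3⟩ | ⟨h1, h2, h3⟩ | ⟨h1, h2, h3⟩ | ⟨h1, h2, h3⟩
    · rw [hs] at h1; exact absurd h1 (by decide)
    · rw [hs] at h1; exact absurd h1 (by decide)
    · rw [h3, if_neg (by omega)]
    · rw [h3, if_pos (Or.inl h2)]

lemma trans_mem (hk : 2 ≤ k) (i : ℕ) :
    ((sfun k x y i,
      ![⟨digit k x i, digit_lt' k x i (by omega)⟩, ⟨digit k y i, digit_lt' k y i (by omega)⟩],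
      sfun k x y (i + 1)) : (ALe k).Q × (Fin 2 → Fin k) × (ALe k).Q) ∈ (ALe k).δ := by
  unfold ALe
  simp only [ALe, Set.mem_setOf_eq, Matrix.cons_val_zero, Matrix.cons_val_one, Matrix.head_cons]
  rw [sfun_succ x y hk i]
  by_cases hxy : x % k ^ i ≤ y % k ^ i
  · have hs : sfun k x y i = 0 := by simp [sfun, hxy]
    rw [hs]
    rcases lt_trichotomy (digit k x i) (digit k y i) with h | h | h
    · left; exact ⟨rfl, by omega, by rw [if_pos (Or.inl h)]⟩
    · left; exact ⟨rfl, by omega, by rw [if_pos (Or.inr ⟨h, hxy⟩)]⟩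
    · right; left; exact ⟨rfl, h, by rw [if_neg (by omega)]⟩
  · have hs : sfun k x y i = 1 := by simp [sfun, hxy]
    rw [hs]
    rcases lt_trichotomy (digit k x i) (digit k y i) with h | h | h
    · right; right; right; exact ⟨rfl, h, by rw [if_pos (Or.inl h)]⟩
    · right; right; left; exact ⟨rfl, by omega, by rw [if_neg (by omega)]⟩
    · right; right; left; exact ⟨rfl, by omega, by rw [if_neg (by omega)]⟩

/-- The run witnessing `W (sfun n)`. -/
lemma W_sfun (hk : 2 ≤ k) (n : ℕ) : (ALe k).W (sfun k x y n) ![x, y] n := by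
  classical
  refine ⟨fun (q : Fin 2) => ∑ i ∈ Finset.range (n + 1), (if sfun k x y i = q then 1 else 0) * k ^ i,
    ?_, ?_, ?_, ?_, ?_⟩
  case _ =>
    intro q
    exact sum_lt' k (n + 1) (by omega) _ (fun i => by split <;> omega)
  all_goals
    have hdig : ∀ (q : Fin 2) (j : ℕ), j ≤ n →
        digit k (∑ i ∈ Finset.range (n + 1), (if sfun k x y i = q then 1 else 0) * k ^ i) j
          = if sfun k x y j = q then 1 else 0 := by
      intro q j hj
      exact digit_sum' k (n + 1) hk _ (fun i => by split <;> omega) j (by omega)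
    beta_reduce
  · intro i hi
    refine ⟨sfun k x y i, ?_, ?_⟩
    · rw [hdig _ i hi, if_pos rfl]
    · intro (q' : Fin 2) (hq' : q' ≠ sfun k x y i); rw [hdig _ i hi, if_neg (Ne.symm hq')]
  · have : (ALe k).q0 = (0 : Fin 2) := rfl
    rw [this, hdig 0 0 (by omega)]
    have : sfun k x y 0 = 0 := by simp [sfun, Nat.mod_one]
    rw [if_pos this]
  · rw [hdig _ n (le_refl n), if_pos rfl]
  · intro i hi q hq
    rw [hdig q i (le_of_lt hi)] at hq
    have hqs : sfun k x y i = q := by by_contra h; rw [if_neg h] at hq; omega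
    refine ⟨![⟨digit k x i, digit_lt' k x i (by omega)⟩,
              ⟨digit k y i, digit_lt' k y i (by omega)⟩],
            sfun k x y (i + 1), ?_, ?_, ?_⟩
    · rw [← hqs]; exact trans_mem x y hk i
    · rw [hdig _ (i+1) hi, if_pos rfl]
    · intro j
      fin_cases j <;> simp

end Main

section Main2
variable {k : ℕ} (x y : ℕ)

lemma W_forward (hk : 2 ≤ k) (n : ℕ) (q1 : Fin 2)
    (hW : (ALe k).W q1 ![x, y] n) : q1 = sfun k x y n := by
  obtain ⟨w, hlt, huniq, h0, h1, htrans⟩ := hW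
  have key : ∀ i, i ≤ n → ∀ q : Fin 2, digit k (w q) i = 1 → q = sfun k x y i := by
    intro i
    induction i with
    | zero =>
      intro _ q hq
      obtain ⟨qs, hqs, hoth⟩ := huniq 0 (Nat.zero_le n)
      have hq0 : (ALe k).q0 = qs := by
        by_contra h; rw [hoth _ h] at h0; omega
      have hqq : q = qs := by
        by_contra h; rw [hoth _ h] at hq; omega
      have : sfun k x y 0 = 0 := by simp [sfun, Nat.mod_one]
      rw [hqq, ← hq0, this]; rfl
    | succ i ih =>
      intro hsn q hq
      have hi : i ≤ n := by omega
      obtain ⟨qs, hqs, _⟩ := huniq i hi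
      have hqs' : qs = sfun k x y i := ih hi qs hqs
      obtain ⟨a, q', hmem, hdig', hdx⟩ := htrans i (by omega) qs hqs
      have hax : digit k x i = (a 0 : ℕ) := by have := hdx 0; simpa using this
      have hay : digit k y i = (a 1 : ℕ) := by have := hdx 1; simpa using this
      have hq' : q' = sfun k x y (i + 1) :=
        trans_forward x y hk i qs q' a hmem hqs' hax hay
      obtain ⟨qt, hqt, hoth'⟩ := huniq (i + 1) hsn
      have e1 : q' = qt := by by_contra h; rw [hoth' _ h] at hdig'; omega
      have e2 : q = qt := by by_contra h; rw [hoth' _ h] at hq; omega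
      rw [e2, ← e1, hq']
  exact key n le_rfl q1 h1

end Main2

/-- `A_≤` compares residues modulo `k^n`: state `q₀` is reached iff
`x mod k^n ≤ y mod k^n`, and state `q₁` iff `x mod k^n > y mod k^n`. -/
theorem stmt19 (k : ℕ) (hk : 2 ≤ k) :
    ∀ x y n : ℕ,
      (x % k ^ n ≤ y % k ^ n ↔ (ALe k).W (0 : Fin 2) ![x, y] n) ∧
      (y % k ^ n < x % k ^ n ↔ (ALe k).W (1 : Fin 2) ![x, y] n) := by

  intro x y n
  constructor
  · constructor
    · intro h
      have hs : sfun k x y n = 0 := by simp [sfun, h]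
      have := W_sfun x y hk n
      rwa [hs] at this
    · intro h
      have := W_forward x y hk n 0 h
      simp only [sfun] at this
      split_ifs at this with h'
      · exact h'
      · exact absurd this (by decide)
  · constructor
    · intro h
      have hs : sfun k x y n = 1 := by simp [sfun]; omega
      have := W_sfun x y hk n
      rwa [hs] at this
    · intro h
      have := W_forward x y hk n 1 h
      simp only [sfun] at this
      split_ifs at this with h'
      · exact absurd this (by decide)
      · omega
end
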